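/- Let Φ ∈ ℝ^{N×k} with first row φ(z₁), and Φ_{-1} the matrix without the first row. Then ‖P_{Φ_{-1}}^⊥ φ(z₁)‖₂² ≥ λ_min(Φ Φ^⊤), where P_{Φ_{-1}}^⊥ = I − P_{Φ_{-1}} and P_{Φ_{-1}} is the orthogonal projection onto the row span of Φ_{-1}. -/

import Mathlib

open Matrix


lemma rayleigh_min {n : ℕ} (A : Matrix (Fin (n+1)) (Fin (n+1)) ℝ) (hA : A.IsHermitian)
    (u : Fin (n+1) → ℝ) :
    (⨅ i, hA.eigenvalues i) * (u ⬝ᵥ u) ≤ u ⬝ᵥ (A *ᵥ u) := by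
  set U : Matrix (Fin (n+1)) (Fin (n+1)) ℝ := ((hA.eigenvectorUnitary : Matrix.unitaryGroup (Fin (n+1)) ℝ) : Matrix (Fin (n+1)) (Fin (n+1)) ℝ) with hU
  have hT : star U = Uᵀ := by
    ext i j; simp [Matrix.star_apply]
  have hUU : U * Uᵀ = 1 := by
    rw [← hT]; exact (Matrix.mem_unitaryGroup_iff).mp hA.eigenvectorUnitary.2
  set y : Fin (n+1) → ℝ := Uᵀ *ᵥ u with hy
  have hy2 : y ⬝ᵥ y = u ⬝ᵥ u := by
    rw [hy, dotProduct_mulVec, mulVec_transpose, vecMul_vecMul, hUU, vecMul_one]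
  have hmain : u ⬝ᵥ (A *ᵥ u) = ∑ i, hA.eigenvalues i * (y i * y i) := by
    conv_lhs => rw [hA.spectral_theorem, Unitary.conjStarAlgAut_apply, ← hU, hT]
    rw [← mulVec_mulVec, ← mulVec_mulVec, dotProduct_mulVec, ← mulVec_transpose]
    simp [dotProduct, mulVec_diagonal, mul_comm, mul_left_comm, hy]
  rw [hmain, ← hy2]
  have hbdd : BddBelow (Set.range hA.eigenvalues) := Set.Finite.bddBelow (Set.finite_range _)
  have : (⨅ i, hA.eigenvalues i) * (y ⬝ᵥ y) = ∑ i, (⨅ i, hA.eigenvalues i) * (y i * y i) := by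
    simp [dotProduct, Finset.mul_sum]
  rw [this]
  apply Finset.sum_le_sum
  intro i _
  exact mul_le_mul_of_nonneg_right (ciInf_le hbdd i) (mul_self_nonneg _)

/-- Let `Φ ∈ ℝ^{(N+1)×k}` with first row `φ(z₁) = Φ 0`, and `Φ₋₁` the matrix
without the first row. Then `‖P_{Φ₋₁}^⊥ φ(z₁)‖² ≥ λ_min(Φ Φᵀ)`, where `P_{Φ₋₁}` is the
orthogonal projection onto the row span of `Φ₋₁` and `λ_min` is the smallest eigenvalue of
the symmetric matrix `Φ Φᵀ`. -/
theorem stmt2 (N k : ℕ) (Φ : Matrix (Fin (N + 1)) (Fin k) ℝ)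
    (hH : (Φ * Φᵀ).IsHermitian)
    (S : Submodule ℝ (EuclideanSpace ℝ (Fin k)))
    (hS : S = Submodule.span ℝ
      (Set.range fun i : Fin N => ((WithLp.equiv 2 (Fin k → ℝ)).symm (Φ i.succ))))
    (v : EuclideanSpace ℝ (Fin k))
    (hv : v = (WithLp.equiv 2 (Fin k → ℝ)).symm (Φ 0)) :
    ⨅ i, hH.eigenvalues i ≤ ‖v - (S.orthogonalProjectionOnto v : EuclideanSpace ℝ (Fin k))‖ ^ 2 := by
  obtain ⟨c, hc⟩ : ∃ c : Fin N → ℝ, ∑ i, c i • ((WithLp.equiv 2 (Fin k → ℝ)).symm (Φ i.succ))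
      = (S.orthogonalProjectionOnto v : EuclideanSpace ℝ (Fin k)) := by
    have hmem : (S.orthogonalProjectionOnto v : EuclideanSpace ℝ (Fin k)) ∈ S :=
      (S.orthogonalProjectionOnto v).2
    rw [hS] at hmem ⊢
    exact (Submodule.mem_span_range_iff_exists_fun ℝ).mp hmem
  set u : Fin (N+1) → ℝ := Fin.cons 1 (fun i => -c i) with hu
  set w : EuclideanSpace ℝ (Fin k) := v - (S.orthogonalProjectionOnto v : EuclideanSpace ℝ (Fin k))
    with hw
  have hPj : ∀ j, (S.orthogonalProjectionOnto v : EuclideanSpace ℝ (Fin k)) j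
      = ∑ i, c i * Φ i.succ j := by
    intro j
    have h := congrArg (EuclideanSpace.proj (𝕜 := ℝ) j) hc
    rw [map_sum] at h
    simpa [WithLp.equiv_symm_apply, PiLp.toLp_apply] using h.symm
  have hwj : ∀ j, w j = (Φᵀ *ᵥ u) j := by
    intro j
    have h0 : w j = v j - (S.orthogonalProjectionOnto v : EuclideanSpace ℝ (Fin k)) j := rfl
    have hvj : v j = Φ 0 j := by rw [hv]; rfl
    rw [h0, hvj, hPj j]
    simp only [mulVec, dotProduct, transpose_apply, Fin.sum_univ_succ, Fin.cons_zero,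
      Fin.cons_succ, mul_one, mul_neg, hu]
    rw [sub_eq_add_neg]
    congr 1
    rw [Finset.sum_neg_distrib, neg_inj]
    exact Finset.sum_congr rfl fun i _ => mul_comm _ _
  have hnorm : ‖w‖^2 = (Φᵀ *ᵥ u) ⬝ᵥ (Φᵀ *ᵥ u) := by
    rw [← real_inner_self_eq_norm_sq]
    rw [PiLp.inner_apply]
    apply Finset.sum_congr rfl
    intro j _
    rw [hwj j]
    simp [dotProduct, sq]
  have hAq : u ⬝ᵥ ((Φ * Φᵀ) *ᵥ u) = (Φᵀ *ᵥ u) ⬝ᵥ (Φᵀ *ᵥ u) := by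
    rw [← mulVec_mulVec, dotProduct_mulVec, ← mulVec_transpose]
  have hpsd : (Φ * Φᵀ).PosSemidef := by
    have := Matrix.posSemidef_self_mul_conjTranspose Φ
    rwa [conjTranspose_eq_transpose_of_trivial] at this
  have hpos : ∀ i, 0 ≤ hH.eigenvalues i := fun i => hpsd.eigenvalues_nonneg i
  have hinf0 : 0 ≤ ⨅ i, hH.eigenvalues i := le_ciInf hpos
  have huu : 1 ≤ u ⬝ᵥ u := by
    have h1 : u ⬝ᵥ u = 1 + ∑ i, (-c i) * (-c i) := by
      simp [dotProduct, Fin.sum_univ_succ, hu]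
    have h2 : 0 ≤ ∑ i, (-c i) * (-c i) :=
      Finset.sum_nonneg fun i _ => mul_self_nonneg _
    linarith
  calc ⨅ i, hH.eigenvalues i = (⨅ i, hH.eigenvalues i) * 1 := (mul_one _).symm
    _ ≤ (⨅ i, hH.eigenvalues i) * (u ⬝ᵥ u) := mul_le_mul_of_nonneg_left huu hinf0
    _ ≤ u ⬝ᵥ ((Φ * Φᵀ) *ᵥ u) := rayleigh_min _ hH u
    _ = ‖w‖^2 := by rw [hnorm, ← hAq]
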